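/- For every integer n ≥ 3, max{ρ(C_n), 1} = max{ρ(SC_n), 1}, where ρ denotes spectral radius, C_n is the compacted matrix of rank n and SC_n is the super compacted matrix of rank n. -/

import Mathlib

/-- The spectral radius of a square real matrix: the maximum (supremum) of the
moduli of its complex eigenvalues. -/
noncomputable def specRad {m : Type*} [Fintype m] [DecidableEq m]
    (M : Matrix m m ℝ) : ℝ :=
  sSup {x : ℝ | ∃ z ∈ spectrum ℂ (M.map (algebraMap ℝ ℂ)), ‖z‖ = x}

/-- Entry `(i+1, j+1)` of the compacted matrix `C_n` of rank `n` (zero-indexed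
`i, j ∈ {0, …, 2n-2}` corresponding to one-indexed indices in `{1, …, 2n-1}`). -/
def Cfun (n i j : ℕ) : ℝ :=
  if i + 1 ≤ n - 3 ∧ j = i + 1 then 1
  else if i = n - 3 ∧ (j = n - 2 ∨ j = n - 1) then 1
  else if i = n - 2 ∧ j + 1 ≤ n then (n : ℝ) - 2
  else if i = n - 2 ∧ n ≤ j then (n : ℝ) - 1
  else if i = n - 1 then 1
  else if i = n ∧ j + 2 ≤ n then (n : ℝ) - 1
  else if i = n ∧ n - 1 ≤ j then (n : ℝ) - 2
  else if i = n + 1 ∧ (j = n - 1 ∨ j = n) then 1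
  else if n + 2 ≤ i ∧ j + 1 = i then 1
  else 0

/-- The compacted matrix `C_n` of rank `n`, of size `(2n-1) × (2n-1)`. -/
def Cmat (n : ℕ) : Matrix (Fin (2 * n - 1)) (Fin (2 * n - 1)) ℝ :=
  Matrix.of fun i j => Cfun n i.val j.val

/-- Entry `(i+1, j+1)` of the super compacted matrix `SC_n` of rank `n`
(zero-indexed `i, j ∈ {0, …, n-1}`). -/
def SCfun (n i j : ℕ) : ℝ :=
  if i + 3 ≤ n ∧ j = i + 1 then 1
  else if i = n - 1 then 1
  else if i = n - 3 ∧ j = n - 1 then 2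
  else if i = n - 2 ∧ j + 2 ≤ n then 2 * (n : ℝ) - 3
  else if i = n - 2 ∧ j = n - 1 then 2 * (n : ℝ) - 4
  else 0

/-- The super compacted matrix `SC_n` of rank `n`, of size `n × n`. -/
def SCmat (n : ℕ) : Matrix (Fin n) (Fin n) ℝ :=
  Matrix.of fun i j => SCfun n i.val j.val


open Finset

lemma mem_spec_iff {N : ℕ} (M : Matrix (Fin N) (Fin N) ℂ) (μ : ℂ) :
    μ ∈ spectrum ℂ M ↔ ∃ v : Fin N → ℂ, v ≠ 0 ∧ M.mulVec v = μ • v := by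
  rw [← AlgEquiv.spectrum_eq (Matrix.toLinAlgEquiv' (R := ℂ) (n := Fin N)) M,
    ← Module.End.hasEigenvalue_iff_mem_spectrum]
  constructor
  · intro h
    obtain ⟨v, hv⟩ := h.exists_hasEigenvector
    refine ⟨v, hv.2, ?_⟩
    have h2 := hv.apply_eq_smul
    rwa [Matrix.toLinAlgEquiv'_apply] at h2
  · rintro ⟨v, hv0, hv⟩
    exact Module.End.hasEigenvalue_of_hasEigenvector
      ⟨Module.End.mem_eigenspace_iff.mpr (by rwa [Matrix.toLinAlgEquiv'_apply]), hv0⟩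

lemma sum_Ico_mirror (m : ℕ) (f : ℕ → ℂ) :
    ∑ j ∈ Ico (m+3) (2*m+5), f j = ∑ t ∈ range (m+2), f (2*m+4-t) := by
  rw [Finset.sum_Ico_eq_sum_range, show 2*m+5-(m+3) = m+2 from by omega,
     ← Finset.sum_range_reflect (fun t => f (m+3+t)) (m+2)]
  refine Finset.sum_congr rfl fun j hj => ?_
  have := mem_range.mp hj
  congr 1
  omega

lemma sum_split (m : ℕ) (f : ℕ → ℂ) :
    ∑ j ∈ range (2*m+5), f j = ∑ j ∈ range (m+3), f j + ∑ j ∈ Ico (m+3) (2*m+5), f j := by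
  rw [range_eq_Ico, ← Finset.sum_Ico_consecutive _ (Nat.zero_le _) (by omega : m+3 ≤ 2*m+5),
    ← range_eq_Ico]

lemma sum_Ico_bot (m : ℕ) (f : ℕ → ℂ) :
    ∑ j ∈ Ico (m+2) (2*m+5), f j = f (m+2) + ∑ j ∈ Ico (m+3) (2*m+5), f j := by
  rw [Finset.sum_eq_sum_Ico_succ_bot (by omega : m+2 < 2*m+5)]

lemma cfunA {m i : ℕ} (hi : i + 1 ≤ m) (j : ℕ) :
    Cfun (m+3) i j = if j = i + 1 then 1 else 0 := by
  unfold Cfun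
  split_ifs <;> first | rfl | omega | (exfalso; omega) | (push_cast; ring)

lemma cfunB (m j : ℕ) :
    Cfun (m+3) m j = if j = m+1 ∨ j = m+2 then 1 else 0 := by
  unfold Cfun
  split_ifs <;> first | rfl | omega | (exfalso; omega) | (push_cast; ring)

lemma cfunC (m j : ℕ) :
    Cfun (m+3) (m+1) j = if j < m+3 then ((m:ℝ)+1) else ((m:ℝ)+2) := by
  unfold Cfun
  split_ifs <;> first | rfl | omega | (exfalso; omega) | (push_cast; ring)

lemma cfunD (m j : ℕ) : Cfun (m+3) (m+2) j = 1 := by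
  unfold Cfun
  split_ifs <;> first | rfl | omega | (exfalso; omega) | (push_cast; ring)

lemma cfunE (m j : ℕ) :
    Cfun (m+3) (m+3) j = if j < m+2 then ((m:ℝ)+2) else ((m:ℝ)+1) := by
  unfold Cfun
  split_ifs <;> first | rfl | omega | (exfalso; omega) | (push_cast; ring)

lemma cfunF (m j : ℕ) :
    Cfun (m+3) (m+4) j = if j = m+2 ∨ j = m+3 then 1 else 0 := by
  unfold Cfun
  split_ifs <;> first | rfl | omega | (exfalso; omega) | (push_cast; ring)

lemma cfunG {m i : ℕ} (hi : m + 5 ≤ i) (j : ℕ) :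
    Cfun (m+3) i j = if j + 1 = i then 1 else 0 := by
  unfold Cfun
  split_ifs <;> first | rfl | omega | (exfalso; omega) | (push_cast; ring)

lemma scfunA {m i : ℕ} (hi : i < m) (j : ℕ) :
    SCfun (m+3) i j = if j = i + 1 then 1 else 0 := by
  unfold SCfun
  split_ifs <;> first | rfl | omega | (exfalso; omega) | (push_cast; ring)

lemma scfunB (m j : ℕ) :
    SCfun (m+3) m j = if j = m+1 then 1 else if j = m+2 then 2 else 0 := by
  unfold SCfun
  split_ifs <;> first | rfl | omega | (exfalso; omega) | (push_cast; ring)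

lemma scfunC (m j : ℕ) :
    SCfun (m+3) (m+1) j = if j < m+2 then (2*(m:ℝ)+3) else if j = m+2 then (2*(m:ℝ)+2) else 0 := by
  unfold SCfun
  split_ifs <;> first | rfl | omega | (exfalso; omega) | (push_cast; ring)

lemma scfunD (m j : ℕ) : SCfun (m+3) (m+2) j = 1 := by
  unfold SCfun
  split_ifs <;> first | rfl | omega | (exfalso; omega) | (push_cast; ring)


lemma sum_single {N b : ℕ} (hb : b < N) (c : ℕ → ℝ) (w : ℕ → ℂ)
    (hc : ∀ j, c j = if j = b then 1 else 0) :
    ∑ j ∈ range N, (c j : ℂ) * w j = w b := by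
  rw [Finset.sum_eq_single_of_mem b (mem_range.mpr hb)]
  · rw [hc b]; simp
  · intro j _ hj; rw [hc j, if_neg hj]; simp

lemma sumA {m i : ℕ} (hi : i + 1 ≤ m) (w : ℕ → ℂ) :
    ∑ j ∈ range (2*m+5), (Cfun (m+3) i j : ℂ) * w j = w (i+1) :=
  sum_single (by omega) _ w (cfunA hi)

lemma sumG {m i : ℕ} (hi : m+5 ≤ i) (hi2 : i < 2*m+5) (w : ℕ → ℂ) :
    ∑ j ∈ range (2*m+5), (Cfun (m+3) i j : ℂ) * w j = w (i-1) := by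
  refine sum_single (by omega) _ w ?_
  intro j; rw [cfunG hi]
  split_ifs <;> first | rfl | omega

lemma sumB (m : ℕ) (w : ℕ → ℂ) :
    ∑ j ∈ range (2*m+5), (Cfun (m+3) m j : ℂ) * w j = w (m+1) + w (m+2) := by
  have key : ∀ j, (Cfun (m+3) m j : ℂ) * w j
      = (if j = m+1 then w j else 0) + (if j = m+2 then w j else 0) := by
    intro j; rw [cfunB]
    by_cases h1 : j = m+1 <;> by_cases h2 : j = m+2 <;> simp [h1, h2] <;> omega
  rw [Finset.sum_congr rfl fun j _ => key j, Finset.sum_add_distrib,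
    Finset.sum_ite_eq' (range (2*m+5)) (m+1) w, Finset.sum_ite_eq' (range (2*m+5)) (m+2) w,
    if_pos (mem_range.mpr (by omega)), if_pos (mem_range.mpr (by omega))]

lemma sumF (m : ℕ) (w : ℕ → ℂ) :
    ∑ j ∈ range (2*m+5), (Cfun (m+3) (m+4) j : ℂ) * w j = w (m+2) + w (m+3) := by
  have key : ∀ j, (Cfun (m+3) (m+4) j : ℂ) * w j
      = (if j = m+2 then w j else 0) + (if j = m+3 then w j else 0) := by
    intro j; rw [cfunF]
    by_cases h1 : j = m+2 <;> by_cases h2 : j = m+3 <;> simp [h1, h2] <;> omega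
  rw [Finset.sum_congr rfl fun j _ => key j, Finset.sum_add_distrib,
    Finset.sum_ite_eq' (range (2*m+5)) (m+2) w, Finset.sum_ite_eq' (range (2*m+5)) (m+3) w,
    if_pos (mem_range.mpr (by omega)), if_pos (mem_range.mpr (by omega))]

lemma sumD (m : ℕ) (w : ℕ → ℂ) :
    ∑ j ∈ range (2*m+5), (Cfun (m+3) (m+2) j : ℂ) * w j = ∑ j ∈ range (2*m+5), w j := by
  refine Finset.sum_congr rfl fun j _ => ?_
  rw [cfunD]; simp

lemma sum_split' (m : ℕ) (f : ℕ → ℂ) :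
    ∑ j ∈ range (2*m+5), f j = ∑ j ∈ range (m+3), f j + ∑ j ∈ Ico (m+3) (2*m+5), f j := by
  rw [range_eq_Ico, ← Finset.sum_Ico_consecutive _ (Nat.zero_le _) (by omega : m+3 ≤ 2*m+5),
    ← range_eq_Ico]

lemma sumC (m : ℕ) (w : ℕ → ℂ) :
    ∑ j ∈ range (2*m+5), (Cfun (m+3) (m+1) j : ℂ) * w j
      = ((m:ℂ)+1) * ∑ j ∈ range (m+3), w j + ((m:ℂ)+2) * ∑ j ∈ Ico (m+3) (2*m+5), w j := by
  rw [sum_split' m (fun j => (Cfun (m+3) (m+1) j : ℂ) * w j), Finset.mul_sum, Finset.mul_sum]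
  congr 1
  · refine Finset.sum_congr rfl fun j hj => ?_
    rw [cfunC, if_pos (mem_range.mp hj)]; push_cast; ring
  · refine Finset.sum_congr rfl fun j hj => ?_
    have := (mem_Ico.mp hj).1
    rw [cfunC, if_neg (by omega)]; push_cast; ring

lemma sum_split2 (m : ℕ) (f : ℕ → ℂ) :
    ∑ j ∈ range (2*m+5), f j = ∑ j ∈ range (m+2), f j + ∑ j ∈ Ico (m+2) (2*m+5), f j := by
  rw [range_eq_Ico, ← Finset.sum_Ico_consecutive _ (Nat.zero_le _) (by omega : m+2 ≤ 2*m+5),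
    ← range_eq_Ico]

lemma sumE (m : ℕ) (w : ℕ → ℂ) :
    ∑ j ∈ range (2*m+5), (Cfun (m+3) (m+3) j : ℂ) * w j
      = ((m:ℂ)+2) * ∑ j ∈ range (m+2), w j + ((m:ℂ)+1) * ∑ j ∈ Ico (m+2) (2*m+5), w j := by
  rw [sum_split2 m (fun j => (Cfun (m+3) (m+3) j : ℂ) * w j), Finset.mul_sum, Finset.mul_sum]
  congr 1
  · refine Finset.sum_congr rfl fun j hj => ?_
    rw [cfunE, if_pos (mem_range.mp hj)]; push_cast; ring
  · refine Finset.sum_congr rfl fun j hj => ?_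
    have := (mem_Ico.mp hj).1
    rw [cfunE, if_neg (by omega)]; push_cast; ring

lemma ssumA {m i : ℕ} (hi : i < m) (v : ℕ → ℂ) :
    ∑ j ∈ range (m+3), (SCfun (m+3) i j : ℂ) * v j = v (i+1) :=
  sum_single (by omega) _ v (scfunA hi)

lemma ssumB (m : ℕ) (v : ℕ → ℂ) :
    ∑ j ∈ range (m+3), (SCfun (m+3) m j : ℂ) * v j = v (m+1) + 2 * v (m+2) := by
  have key : ∀ j, (SCfun (m+3) m j : ℂ) * v j
      = (if j = m+1 then v j else 0) + (if j = m+2 then 2 * v j else 0) := by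
    intro j; rw [scfunB]
    by_cases h1 : j = m+1 <;> by_cases h2 : j = m+2 <;> simp [h1, h2] <;> omega
  rw [Finset.sum_congr rfl fun j _ => key j, Finset.sum_add_distrib,
    Finset.sum_ite_eq' (range (m+3)) (m+1) v, Finset.sum_ite_eq' (range (m+3)) (m+2) (fun j => 2 * v j),
    if_pos (mem_range.mpr (by omega)), if_pos (mem_range.mpr (by omega))]

lemma ssumC (m : ℕ) (v : ℕ → ℂ) :
    ∑ j ∈ range (m+3), (SCfun (m+3) (m+1) j : ℂ) * v j
      = (2*(m:ℂ)+3) * ∑ j ∈ range (m+2), v j + (2*(m:ℂ)+2) * v (m+2) := by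
  rw [Finset.sum_range_succ, Finset.mul_sum]
  congr 1
  · refine Finset.sum_congr rfl fun j hj => ?_
    rw [scfunC, if_pos (mem_range.mp hj)]; push_cast; ring
  · rw [scfunC, if_neg (by omega), if_pos rfl]; push_cast; ring

lemma ssumD (m : ℕ) (v : ℕ → ℂ) :
    ∑ j ∈ range (m+3), (SCfun (m+3) (m+2) j : ℂ) * v j = ∑ j ∈ range (m+3), v j := by
  refine Finset.sum_congr rfl fun j _ => ?_
  rw [scfunD]; simp

lemma mulVec_C_eq (m : ℕ) (w : ℕ → ℂ) (i : Fin (2*(m+3)-1)) :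
    ((Cmat (m+3)).map (algebraMap ℝ ℂ)).mulVec (fun j => w j.val) i
      = ∑ j ∈ range (2*m+5), (Cfun (m+3) i.val j : ℂ) * w j := by
  rw [show (2*m+5) = 2*(m+3)-1 from by omega,
    ← Fin.sum_univ_eq_sum_range (fun j => (Cfun (m+3) i.val j : ℂ) * w j) (2*(m+3)-1)]
  simp [Matrix.mulVec, dotProduct, Cmat, Matrix.map_apply, Complex.coe_algebraMap]

lemma mulVec_S_eq (m : ℕ) (v : ℕ → ℂ) (i : Fin (m+3)) :
    ((SCmat (m+3)).map (algebraMap ℝ ℂ)).mulVec (fun j => v j.val) i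
      = ∑ j ∈ range (m+3), (SCfun (m+3) i.val j : ℂ) * v j := by
  rw [← Fin.sum_univ_eq_sum_range (fun j => (SCfun (m+3) i.val j : ℂ) * v j) (m+3)]
  simp [Matrix.mulVec, dotProduct, SCmat, Matrix.map_apply, Complex.coe_algebraMap]

lemma specS_subset (m : ℕ) :
    spectrum ℂ ((SCmat (m+3)).map (algebraMap ℝ ℂ))
      ⊆ spectrum ℂ ((Cmat (m+3)).map (algebraMap ℝ ℂ)) := by
  intro μ hμ
  rw [mem_spec_iff] at hμ ⊢
  obtain ⟨v, hv0, hv⟩ := hμ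
  set v' : ℕ → ℂ := fun t => if h : t < m+3 then v ⟨t, h⟩ else 0 with hv'def
  have veq : v = fun j : Fin (m+3) => v' j.val := by
    funext j; simp [v', j.isLt]
  have hS : ∀ i : ℕ, i < m+3 →
      ∑ j ∈ range (m+3), (SCfun (m+3) i j : ℂ) * v' j = μ * v' i := by
    intro i hi
    have h1 := congrFun hv ⟨i, hi⟩
    rw [veq] at h1
    rw [mulVec_S_eq] at h1
    simpa using h1
  have hSlt : ∀ i, i < m → v' (i+1) = μ * v' i := by
    intro i h
    have := hS i (by omega); rwa [ssumA h] at this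
  have hSm : v' (m+1) + 2 * v' (m+2) = μ * v' m := by
    have := hS m (by omega); rwa [ssumB] at this
  have hSm1 : (2*(m:ℂ)+3) * ∑ j ∈ range (m+2), v' j + (2*(m:ℂ)+2) * v' (m+2)
      = μ * v' (m+1) := by
    have := hS (m+1) (by omega); rwa [ssumC] at this
  have hSm2 : ∑ j ∈ range (m+2), v' j + v' (m+2) = μ * v' (m+2) := by
    have := hS (m+2) (by omega); rw [ssumD] at this
    rwa [Finset.sum_range_succ] at this
  set w' : ℕ → ℂ := fun i =>
    if i ≤ m+1 then v' i else if i = m+2 then 2 * v' (m+2) else v' (2*m+4-i) with hw'def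
  have hwlow : ∀ i, i ≤ m+1 → w' i = v' i := fun i h => if_pos h
  have hwmid : w' (m+2) = 2 * v' (m+2) := by simp [w']
  have hwhigh : ∀ i, m+3 ≤ i → w' i = v' (2*m+4-i) := by
    intro i h; simp only [w']; rw [if_neg (by omega), if_neg (by omega)]
  have hB : ∑ j ∈ range (m+2), w' j = ∑ j ∈ range (m+2), v' j :=
    Finset.sum_congr rfl fun j hj => hwlow j (by have := mem_range.mp hj; omega)
  have h3s : ∑ j ∈ range (m+3), w' j = ∑ j ∈ range (m+2), v' j + 2 * v' (m+2) := by
    rw [Finset.sum_range_succ, hB, hwmid]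
  have hI : ∑ j ∈ Ico (m+3) (2*m+5), w' j = ∑ j ∈ range (m+2), v' j := by
    rw [sum_Ico_mirror]
    refine Finset.sum_congr rfl fun t ht => ?_
    have := mem_range.mp ht
    rw [hwhigh _ (by omega)]; congr 1; omega
  have hI2 : ∑ j ∈ Ico (m+2) (2*m+5), w' j
      = 2 * v' (m+2) + ∑ j ∈ range (m+2), v' j := by
    rw [sum_Ico_bot, hwmid, hI]
  refine ⟨fun j => w' j.val, ?_, ?_⟩
  · obtain ⟨a, ha⟩ := Function.ne_iff.mp hv0
    simp only [Pi.zero_apply] at ha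
    intro h0
    by_cases hc : a.val ≤ m+1
    · have hb := congrFun h0 ⟨a.val, by omega⟩
      simp only [Pi.zero_apply] at hb
      rw [hwlow _ hc] at hb
      apply ha
      have : v' a.val = v a := by simp [v', a.isLt]
      rwa [this] at hb
    · have hav : a.val = m+2 := by have := a.isLt; omega
      have hb := congrFun h0 ⟨m+2, by omega⟩
      simp only [Pi.zero_apply] at hb
      rw [hwmid] at hb
      apply ha
      have h2 : v' (m+2) = v a := by
        have : a = ⟨m+2, by omega⟩ := Fin.ext hav
        rw [this]; simp [v']
      rw [h2] at hb
      have := mul_eq_zero.mp hb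
      simpa using this
  · funext i
    rw [mulVec_C_eq]
    simp only [Pi.smul_apply, smul_eq_mul]
    have hiv : i.val < 2*m+5 := by have := i.isLt; omega
    by_cases h1 : i.val + 1 ≤ m
    · rw [sumA h1, hwlow _ (by omega), hwlow _ (by omega)]
      exact hSlt i.val (by omega)
    by_cases h2 : i.val = m
    · rw [h2, sumB, hwlow _ (by omega), hwmid, hwlow _ (by omega)]
      exact hSm
    by_cases hk3 : i.val = m+1
    · rw [hk3, sumC, h3s, hI, hwlow _ (by omega)]
      linear_combination hSm1
    by_cases h4 : i.val = m+2
    · rw [h4, sumD, sum_split, h3s, hI, hwmid]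
      linear_combination 2 * hSm2
    by_cases h5 : i.val = m+3
    · rw [h5, sumE, hB, hI2, hwhigh _ (by omega),
        show 2*m+4-(m+3) = m+1 from by omega]
      linear_combination hSm1
    by_cases h6 : i.val = m+4
    · rw [h6, sumF, hwmid, hwhigh _ (by omega), hwhigh _ (by omega),
        show 2*m+4-(m+3) = m+1 from by omega, show 2*m+4-(m+4) = m from by omega]
      linear_combination hSm
    · have hge : m+5 ≤ i.val := by omega
      rw [sumG hge hiv, hwhigh _ (by omega), hwhigh _ (by omega)]
      have ht : 2*m+4-(i.val-1) = (2*m+4-i.val)+1 := by omega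
      rw [ht]
      exact hSlt _ (by omega)

lemma specC_cases (m : ℕ) (μ : ℂ)
    (hμ : μ ∈ spectrum ℂ ((Cmat (m+3)).map (algebraMap ℝ ℂ))) :
    μ ∈ spectrum ℂ ((SCmat (m+3)).map (algebraMap ℝ ℂ)) ∨ ‖μ‖ = 1 := by
  rw [mem_spec_iff] at hμ
  obtain ⟨w, hw0, hw⟩ := hμ
  set w' : ℕ → ℂ := fun t => if h : t < 2*(m+3)-1 then w ⟨t, h⟩ else 0 with hw'def
  have weq : w = fun j : Fin (2*(m+3)-1) => w' j.val := by
    funext j; simp [w', j.isLt]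
  have hC : ∀ i : ℕ, i < 2*m+5 →
      ∑ j ∈ range (2*m+5), (Cfun (m+3) i j : ℂ) * w' j = μ * w' i := by
    intro i hi
    have h1 := congrFun hw ⟨i, by omega⟩
    rw [weq] at h1
    rw [mulVec_C_eq] at h1
    simpa using h1
  -- the folded vector
  set u' : ℕ → ℂ := fun i => if i ≤ m+1 then w' i + w' (2*m+4-i) else w' i with hu'def
  have hulow : ∀ i, i ≤ m+1 → u' i = w' i + w' (2*m+4-i) := fun i h => if_pos h
  have humid : u' (m+2) = w' (m+2) := by simp [u']
  have hSu : ∀ i : ℕ, i < m+3 →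
      ∑ j ∈ range (m+3), (SCfun (m+3) i j : ℂ) * u' j = μ * u' i := by
    intro i hi
    have hBsum : ∑ j ∈ range (m+2), u' j
        = ∑ j ∈ range (m+2), w' j + ∑ j ∈ Ico (m+3) (2*m+5), w' j := by
      rw [sum_Ico_mirror, ← Finset.sum_add_distrib]
      refine Finset.sum_congr rfl fun t ht => ?_
      exact hulow t (by have := mem_range.mp ht; omega)
    by_cases h1 : i < m
    · rw [ssumA h1, hulow i (by omega), hulow (i+1) (by omega)]
      have e1 := hC i (by omega)
      rw [sumA (by omega : i+1 ≤ m)] at e1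
      have e2 := hC (2*m+4-i) (by omega)
      rw [sumG (by omega) (by omega)] at e2
      rw [show 2*m+4-i-1 = 2*m+4-(i+1) from by omega] at e2
      linear_combination e1 + e2
    by_cases h2 : i = m
    · rw [h2, ssumB, hulow m (by omega), hulow (m+1) (by omega), humid,
        show 2*m+4-m = m+4 from by omega, show 2*m+4-(m+1) = m+3 from by omega]
      have e1 := hC m (by omega); rw [sumB] at e1
      have e2 := hC (m+4) (by omega); rw [sumF] at e2
      linear_combination e1 + e2
    by_cases h3 : i = m+1
    · subst h3
      rw [ssumC, hBsum, humid, hulow (m+1) (by omega),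
        show 2*m+4-(m+1) = m+3 from by omega]
      have e1 := hC (m+1) (by omega)
      rw [sumC, Finset.sum_range_succ] at e1
      have e2 := hC (m+3) (by omega)
      rw [sumE, sum_Ico_bot] at e2
      linear_combination e1 + e2
    · have h4 : i = m+2 := by omega
      subst h4
      rw [ssumD, Finset.sum_range_succ, hBsum, humid]
      have e1 := hC (m+2) (by omega)
      rw [sumD, sum_split, Finset.sum_range_succ] at e1
      linear_combination e1
  by_cases hu : (fun i : Fin (m+3) => u' i.val) = 0
  · -- u vanishes: μ is a root of 1 + μ + ... + μ^{m+2}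
    right
    have hu0 : ∀ i : ℕ, i < m+3 → u' i = 0 := by
      intro i hi
      simpa using congrFun hu ⟨i, hi⟩
    have hmid : w' (m+2) = 0 := by
      have := hu0 (m+2) (by omega); rwa [humid] at this
    have hmirror : ∀ i, i ≤ m+1 → w' (2*m+4-i) = -w' i := by
      intro i h
      have := hu0 i (by omega)
      rw [hulow i h] at this
      linear_combination this
    have hstep : ∀ t, t ≤ m → w' (t+1) = μ * w' t := by
      intro t ht
      by_cases hlt : t < m
      · have e := hC t (by omega)
        rwa [sumA (by omega : t+1 ≤ m)] at e
      · have htm : t = m := by omega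
        subst htm
        have e := hC t (by omega)
        rw [sumB, hmid] at e
        linear_combination e
    have hpow : ∀ t, t ≤ m+1 → w' t = μ^t * w' 0 := by
      intro t
      induction t with
      | zero => intro _; simp
      | succ k ih =>
        intro h
        rw [hstep k (by omega), ih (by omega)]; ring
    have hw00 : w' 0 ≠ 0 := by
      intro hz
      apply hw0
      rw [weq]; funext j
      simp only [Pi.zero_apply]
      have hj : j.val < 2*m+5 := by have := j.isLt; omega
      by_cases hle : j.val ≤ m+1
      · rw [hpow _ hle, hz, mul_zero]
      by_cases heq : j.val = m+2
      · rw [heq]; exact hmid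
      · have h5 := hmirror (2*m+4-j.val) (by omega)
        rw [show 2*m+4-(2*m+4-j.val) = j.val from by omega] at h5
        rw [h5, hpow _ (by omega), hz, mul_zero, neg_zero]
    have hIneg : ∑ j ∈ Ico (m+3) (2*m+5), w' j = -∑ j ∈ range (m+2), w' j := by
      rw [sum_Ico_mirror, ← Finset.sum_neg_distrib]
      refine Finset.sum_congr rfl fun t ht => ?_
      exact hmirror t (by have := mem_range.mp ht; omega)
    have hBpow : ∑ j ∈ range (m+2), w' j = (∑ t ∈ range (m+2), μ^t) * w' 0 := by
      rw [Finset.sum_mul]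
      refine Finset.sum_congr rfl fun t ht => ?_
      rw [hpow t (by have := mem_range.mp ht; omega)]
    have hwm1 : w' (m+1) = μ^(m+1) * w' 0 := hpow _ (le_refl _)
    have e1 := hC (m+1) (by omega)
    rw [sumC, Finset.sum_range_succ, hmid, hIneg, hBpow, hwm1] at e1
    have hkey : (∑ t ∈ range (m+3), μ^t) * w' 0 = 0 := by
      rw [Finset.sum_range_succ, add_mul]
      linear_combination -e1
    have geo : ∑ t ∈ range (m+3), μ^t = 0 :=
      (mul_eq_zero.mp hkey).resolve_right hw00
    have hμpow : μ^(m+3) = 1 := by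
      have hg := geom_sum_mul μ (m+3)
      rw [geo, zero_mul] at hg
      linear_combination -hg
    have habs : (‖μ‖)^(m+3) = 1 := by
      rw [← norm_pow, hμpow, norm_one]
    rcases lt_trichotomy (‖μ‖) 1 with h|h|h
    · exfalso
      have := pow_lt_one₀ (norm_nonneg μ) h (by omega : m+3 ≠ 0)
      rw [habs] at this; exact lt_irrefl 1 this
    · exact h
    · exfalso
      have := one_lt_pow₀ h (by omega : m+3 ≠ 0)
      rw [habs] at this; exact lt_irrefl 1 this
  · left
    rw [mem_spec_iff]
    refine ⟨fun i => u' i.val, hu, ?_⟩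
    funext i
    rw [mulVec_S_eq]
    simpa using hSu i.val i.isLt

open Real in
lemma exists_unit_eigen (m : ℕ) :
    ∃ μ ∈ spectrum ℂ ((Cmat (m+3)).map (algebraMap ℝ ℂ)), ‖μ‖ = 1 := by
  set μ : ℂ := Complex.exp (2 * π * Complex.I / (m+3)) with hμdef
  have hprim : IsPrimitiveRoot μ (m+3) := by
    have := Complex.isPrimitiveRoot_exp (m+3) (by omega)
    simpa using this
  have geo : ∑ t ∈ range (m+3), μ^t = 0 := hprim.geom_sum_eq_zero (by omega)
  have habs : ‖μ‖ = 1 := by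
    have harg : (2 * π * Complex.I / ((m:ℂ)+3)) = ((2 * π / ((m:ℝ)+3) : ℝ) : ℂ) * Complex.I := by
      have hne : ((m:ℂ)+3) ≠ 0 := by
        intro h
        have := congrArg Complex.re h
        simp at this
        nlinarith [this]
      push_cast
      field_simp
    rw [hμdef, harg, Complex.norm_exp_ofReal_mul_I]
  refine ⟨μ, ?_, habs⟩
  rw [mem_spec_iff]
  set w' : ℕ → ℂ := fun t =>
    if t ≤ m+1 then μ^t else if t = m+2 then 0 else -μ^(2*m+4-t) with hw'def
  have hwlow : ∀ t, t ≤ m+1 → w' t = μ^t := fun t h => if_pos h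
  have hwmid : w' (m+2) = 0 := by simp [w']
  have hwhigh : ∀ t, m+3 ≤ t → w' t = -μ^(2*m+4-t) := by
    intro t h; simp only [w']; rw [if_neg (by omega), if_neg (by omega)]
  have hG : ∑ j ∈ range (m+2), w' j = ∑ j ∈ range (m+2), μ^j :=
    Finset.sum_congr rfl fun j hj => hwlow j (by have := mem_range.mp hj; omega)
  have h3s : ∑ j ∈ range (m+3), w' j = ∑ j ∈ range (m+2), μ^j := by
    rw [Finset.sum_range_succ, hG, hwmid, add_zero]
  have hI : ∑ j ∈ Ico (m+3) (2*m+5), w' j = -∑ j ∈ range (m+2), μ^j := by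
    rw [sum_Ico_mirror, ← Finset.sum_neg_distrib]
    refine Finset.sum_congr rfl fun t ht => ?_
    have := mem_range.mp ht
    rw [hwhigh _ (by omega), show 2*m+4-(2*m+4-t) = t from by omega]
  have hgeo2 : ∑ j ∈ range (m+2), μ^j + μ^(m+2) = 0 := by
    rw [← Finset.sum_range_succ]; exact geo
  refine ⟨fun j => w' j.val, ?_, ?_⟩
  · intro h0
    have hb := congrFun h0 ⟨0, by omega⟩
    simp only [Pi.zero_apply] at hb
    rw [hwlow 0 (by omega)] at hb
    simp at hb
  · funext i
    rw [mulVec_C_eq]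
    simp only [Pi.smul_apply, smul_eq_mul]
    have hiv : i.val < 2*m+5 := by have := i.isLt; omega
    by_cases h1 : i.val + 1 ≤ m
    · rw [sumA h1, hwlow _ (by omega), hwlow _ (by omega)]; ring
    by_cases h2 : i.val = m
    · rw [h2, sumB, hwlow _ (by omega), hwmid, hwlow _ (by omega)]; ring
    by_cases h3 : i.val = m+1
    · rw [h3, sumC, h3s, hI, hwlow _ (by omega)]
      linear_combination -hgeo2
    by_cases h4 : i.val = m+2
    · rw [h4, sumD, sum_split, h3s, hI, hwmid]; ring
    by_cases h5 : i.val = m+3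
    · rw [h5, sumE, hG, sum_Ico_bot, hwmid, hI, hwhigh _ (by omega),
        show 2*m+4-(m+3) = m+1 from by omega]
      linear_combination hgeo2
    by_cases h6 : i.val = m+4
    · rw [h6, sumF, hwmid, hwhigh _ (by omega), hwhigh _ (by omega),
        show 2*m+4-(m+3) = m+1 from by omega, show 2*m+4-(m+4) = m from by omega]
      ring
    · have hge : m+5 ≤ i.val := by omega
      rw [sumG hge hiv, hwhigh _ (by omega), hwhigh _ (by omega),
        show 2*m+4-(i.val-1) = (2*m+4-i.val)+1 from by omega]
      ring


theorem stmt9 (n : ℕ) (hn : 3 ≤ n) :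
    max (specRad (Cmat n)) 1 = max (specRad (SCmat n)) 1 := by
  obtain ⟨m, rfl⟩ : ∃ m, n = m + 3 := ⟨n - 3, by omega⟩
  unfold specRad
  set MC := (Cmat (m+3)).map (algebraMap ℝ ℂ) with hMC
  set MS := (SCmat (m+3)).map (algebraMap ℝ ℂ) with hMS
  set EC : Set ℝ := {x | ∃ z ∈ spectrum ℂ MC, ‖z‖ = x} with hEC
  set ES : Set ℝ := {x | ∃ z ∈ spectrum ℂ MS, ‖z‖ = x} with hES
  have hECim : EC = (fun z : ℂ => ‖z‖) '' spectrum ℂ MC := rfl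
  have hESim : ES = (fun z : ℂ => ‖z‖) '' spectrum ℂ MS := rfl
  have hECfin : EC.Finite := by rw [hECim]; exact (Matrix.finite_spectrum MC).image _
  have hESfin : ES.Finite := by rw [hESim]; exact (Matrix.finite_spectrum MS).image _
  have hECbdd : BddAbove EC := hECfin.bddAbove
  have hESbdd : BddAbove ES := hESfin.bddAbove
  obtain ⟨μ1, hμ1, habs1⟩ := exists_unit_eigen m
  have h1EC : (1:ℝ) ∈ EC := ⟨μ1, hμ1, habs1⟩
  have h1le : (1:ℝ) ≤ sSup EC := le_csSup hECbdd h1EC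
  rw [max_eq_left h1le]
  apply le_antisymm
  · refine csSup_le ⟨1, h1EC⟩ ?_
    rintro x ⟨z, hz, rfl⟩
    rcases specC_cases m z hz with h | h
    · exact le_trans (le_csSup hESbdd ⟨z, h, rfl⟩) (le_max_left _ _)
    · rw [h]; exact le_max_right _ _
  · apply max_le
    · by_cases hne : ES.Nonempty
      · refine csSup_le_csSup hECbdd hne ?_
        rw [hECim, hESim]
        exact Set.image_mono (specS_subset m)
      · rw [Set.not_nonempty_iff_eq_empty.mp hne, Real.sSup_empty]
        linarith
    · exact h1le
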